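/- arXiv:1606.00384 — 2 statements merged into one kernel-verified Lean document; each statement's English description precedes it below -/
import Mathlib

section
/- Let f : R^{1+n} → C^{1+n} be a C^1 vector field such that |f| and all |∂f_i/∂x^j| are bounded by C(1+|x|)^{-1-ε} for some ε > 0, C > 0. Define Lf(x,θ) = ∫_R f(s, x+sθ)·(1,θ) ds for x ∈ R^n, θ ∈ S^{n-1}. Then for any v ∈ R^n, (v·∇_x)Lf(x,θ) = ∫_R g(s,x+sθ)·(1,θ) ds, where g_i(z) = Σ_{j≠i} (∂_j f_i − ∂_i f_j)(z) · w^j with w = (0,v) ∈ R^{1+n} (indexing coordinates 0,…,n, with coordinate 0 being time). -/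
open MeasureTheory

noncomputable def lightRay (n : ℕ) (x θ : Fin n → ℝ) (s : ℝ) : Fin (n + 1) → ℝ :=
  Fin.cons s (fun k => x k + s * θ k)

noncomputable def lightDir (n : ℕ) (θ : Fin n → ℝ) : Fin (n + 1) → ℂ :=
  Fin.cons 1 (fun k => (θ k : ℂ))

noncomputable def pd (n : ℕ) (F : (Fin (n + 1) → ℝ) → ℂ) (j : Fin (n + 1))
    (z : Fin (n + 1) → ℝ) : ℂ :=
  fderiv ℝ F z (Pi.single j 1)

noncomputable def Wmap (n : ℕ) : (Fin n → ℝ) →L[ℝ] (Fin (n + 1) → ℝ) :=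
  LinearMap.toContinuousLinearMap
  { toFun := fun v => Fin.cons 0 v
    map_add' := fun a b => funext fun j => by
      refine Fin.cases ?_ (fun k => ?_) j <;> simp
    map_smul' := fun c a => funext fun j => by
      refine Fin.cases ?_ (fun k => ?_) j <;> simp }

lemma Wmap_apply (n : ℕ) (v : Fin n → ℝ) : Wmap n v = Fin.cons 0 v := rfl

lemma norm_Wmap_apply_le (n : ℕ) (v : Fin n → ℝ) : ‖Wmap n v‖ ≤ ‖v‖ := by
  rw [Wmap_apply]
  refine (pi_norm_le_iff_of_nonneg (norm_nonneg v)).2 fun j => ?_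
  refine Fin.cases ?_ (fun k => ?_) j
  · simp
  · simpa using norm_le_pi_norm v k

noncomputable def Fp (n : ℕ) (f : (Fin (n + 1) → ℝ) → Fin (n + 1) → ℂ) (θ : Fin n → ℝ)
    (y : Fin n → ℝ) (s : ℝ) : (Fin n → ℝ) →L[ℝ] ℂ :=
  ∑ i, lightDir n θ i •
    ((ContinuousLinearMap.proj (R := ℝ) (φ := fun _ : Fin (n + 1) => ℂ) i).comp
      ((fderiv ℝ f (lightRay n y θ s)).comp (Wmap n)))

noncomputable def Dphi (n : ℕ) (f : (Fin (n + 1) → ℝ) → Fin (n + 1) → ℂ)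
    (w : Fin (n + 1) → ℝ) (z : Fin (n + 1) → ℝ) : (Fin (n + 1) → ℝ) →L[ℝ] ℂ :=
  ∑ j, ((w j : ℂ)) •
    ((ContinuousLinearMap.proj (R := ℝ) (φ := fun _ : Fin (n + 1) => ℂ) j).comp (fderiv ℝ f z))

lemma single_expand {m : ℕ} (y : Fin m → ℝ) :
    y = ∑ j, y j • (Pi.single j (1 : ℝ) : Fin m → ℝ) := by
  funext i
  rw [Finset.sum_apply]
  simp [Pi.single_apply, mul_ite]

/-- Let `f : ℝ^{1+n} → ℂ^{1+n}` be `C¹` with `|f|` and `|∂f|` bounded by `C(1+|z|)^{-1-ε}`,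
and `Lf(x,θ) = ∫_ℝ f(s,x+sθ)·(1,θ) ds`. Then for any `v ∈ ℝ^n`,
`(v·∇_x)Lf(x,θ) = ∫_ℝ g(s,x+sθ)·(1,θ) ds`, where
`g_i(z) = Σ_{j≠i} (∂_j f_i − ∂_i f_j)(z) w^j` with `w = (0,v)`. -/
theorem stmt_1 (n : ℕ) (f : (Fin (n + 1) → ℝ) → Fin (n + 1) → ℂ)
    (hf : ContDiff ℝ 1 f) (C ε : ℝ) (hC : 0 < C) (hε : 0 < ε)
    (hdecay : ∀ z, ‖f z‖ ≤ C * (1 + ‖z‖) ^ (-(1 + ε)))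
    (hdecay' : ∀ z, ‖fderiv ℝ f z‖ ≤ C * (1 + ‖z‖) ^ (-(1 + ε)))
    (θ : Fin n → ℝ) (hθ : ∑ i, θ i * θ i = 1) (x v : Fin n → ℝ) :
    fderiv ℝ (fun y : Fin n → ℝ =>
        ∫ s : ℝ, ∑ i, f (lightRay n y θ s) i * lightDir n θ i) x v
      = ∫ s : ℝ, ∑ i,
          (∑ j ∈ Finset.univ \ {i},
            (pd n (fun z => f z i) j (lightRay n x θ s)
              - pd n (fun z => f z j) i (lightRay n x θ s))
            * ((Fin.cons 0 v : Fin (n + 1) → ℝ) j : ℂ))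
          * lightDir n θ i := by
  classical
  have hfd : ∀ z, DifferentiableAt ℝ f z := fun z => hf.differentiable one_ne_zero z
  set w : Fin (n + 1) → ℝ := Fin.cons 0 v with hw
  set u : Fin (n + 1) → ℝ := Fin.cons 1 θ with hu
  -- continuity of the ray
  have hγcont : ∀ y, Continuous fun s => lightRay n y θ s := by
    intro y
    apply continuous_pi
    intro j
    refine Fin.cases ?_ (fun k => ?_) j
    · simpa [lightRay] using continuous_id'
    · simp only [lightRay, Fin.cons_succ]
      fun_prop
  -- decay bounds along the ray
  have habs : ∀ (y : Fin n → ℝ) (s : ℝ), |s| ≤ ‖lightRay n y θ s‖ := by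
    intro y s
    have h := norm_le_pi_norm (lightRay n y θ s) 0
    simpa [lightRay, Real.norm_eq_abs] using h
  have hdec : ∀ (y : Fin n → ℝ) (s : ℝ),
      C * (1 + ‖lightRay n y θ s‖) ^ (-(1 + ε)) ≤ C * (1 + |s|) ^ (-(1 + ε)) := by
    intro y s
    refine mul_le_mul_of_nonneg_left ?_ hC.le
    exact Real.rpow_le_rpow_of_nonpos (by positivity) (by linarith [habs y s]) (by linarith)
  have hfb : ∀ (y : Fin n → ℝ) (s : ℝ),
      ‖f (lightRay n y θ s)‖ ≤ C * (1 + |s|) ^ (-(1 + ε)) :=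
    fun y s => (hdecay _).trans (hdec y s)
  have hfb' : ∀ (y : Fin n → ℝ) (s : ℝ),
      ‖fderiv ℝ f (lightRay n y θ s)‖ ≤ C * (1 + |s|) ^ (-(1 + ε)) :=
    fun y s => (hdecay' _).trans (hdec y s)
  have hbpos : ∀ s : ℝ, 0 ≤ C * (1 + |s|) ^ (-(1 + ε)) := by
    intro s; positivity
  have hbint : Integrable (fun s : ℝ => C * (1 + |s|) ^ (-(1 + ε))) := by
    refine Integrable.const_mul ?_ C
    have h1 : ((Module.finrank ℝ ℝ : ℝ)) < 1 + ε := by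
      simp [Module.finrank_self]; linarith
    simpa [Real.norm_eq_abs] using integrable_one_add_norm (E := ℝ) (μ := volume) h1
  set K : ℝ := ∑ i, ‖lightDir n θ i‖ with hK
  have hK0 : 0 ≤ K := Finset.sum_nonneg fun i _ => norm_nonneg _
  -- the ray as an affine function of the base point
  have hγderiv : ∀ (s : ℝ) (y : Fin n → ℝ),
      HasFDerivAt (fun y => lightRay n y θ s) (Wmap n) y := by
    intro s y
    have heq : (fun y : Fin n → ℝ => lightRay n y θ s)
        = fun y => (Fin.cons s (fun k => s * θ k) : Fin (n + 1) → ℝ) + Wmap n y := by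
      funext y
      funext j
      refine Fin.cases ?_ (fun k => ?_) j
      · simp [lightRay, Wmap_apply]
      · simp [lightRay, Wmap_apply]; ring
    rw [heq]
    exact ((Wmap n).hasFDerivAt).const_add _
  -- differentiation of the integrand in the base point
  have hFderiv : ∀ (s : ℝ) (y : Fin n → ℝ),
      HasFDerivAt (fun y => ∑ i, f (lightRay n y θ s) i * lightDir n θ i) (Fp n f θ y s) y := by
    intro s y
    refine HasFDerivAt.fun_sum fun i _ => ?_
    have h3 : HasFDerivAt (fun y => f (lightRay n y θ s))
        ((fderiv ℝ f (lightRay n y θ s)).comp (Wmap n)) y :=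
      ((hfd _).hasFDerivAt).comp y (hγderiv s y)
    have h4 := ((ContinuousLinearMap.proj (R := ℝ) (φ := fun _ : Fin (n + 1) => ℂ)
      i).hasFDerivAt).comp y h3
    exact h4.mul_const _
  -- norm bound on Fp
  have hFple : ∀ (y : Fin n → ℝ) (s : ℝ), ‖Fp n f θ y s‖ ≤ K * (C * (1 + |s|) ^ (-(1 + ε))) := by
    intro y s
    refine ContinuousLinearMap.opNorm_le_bound _ (by positivity) fun z => ?_
    have hev : (Fp n f θ y s) z
        = ∑ i, lightDir n θ i • ((fderiv ℝ f (lightRay n y θ s)) (Wmap n z)) i := by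
      simp [Fp, ContinuousLinearMap.sum_apply]
    rw [hev]
    calc ‖∑ i, lightDir n θ i • ((fderiv ℝ f (lightRay n y θ s)) (Wmap n z)) i‖
        ≤ ∑ i, ‖lightDir n θ i • ((fderiv ℝ f (lightRay n y θ s)) (Wmap n z)) i‖ :=
          norm_sum_le _ _
      _ ≤ ∑ i, ‖lightDir n θ i‖ * (C * (1 + |s|) ^ (-(1 + ε)) * ‖z‖) := by
          refine Finset.sum_le_sum fun i _ => ?_
          rw [norm_smul]
          refine mul_le_mul_of_nonneg_left ?_ (norm_nonneg _)
          calc ‖((fderiv ℝ f (lightRay n y θ s)) (Wmap n z)) i‖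
              ≤ ‖(fderiv ℝ f (lightRay n y θ s)) (Wmap n z)‖ := norm_le_pi_norm _ i
            _ ≤ ‖fderiv ℝ f (lightRay n y θ s)‖ * ‖Wmap n z‖ :=
                ContinuousLinearMap.le_opNorm _ _
            _ ≤ C * (1 + |s|) ^ (-(1 + ε)) * ‖z‖ :=
                mul_le_mul (hfb' y s) (norm_Wmap_apply_le n z) (norm_nonneg _) (hbpos s)
      _ = K * (C * (1 + |s|) ^ (-(1 + ε))) * ‖z‖ := by
          rw [← Finset.sum_mul]; ring
  -- continuity of Fp in s
  have hfderivcont : ∀ y, Continuous fun s => fderiv ℝ f (lightRay n y θ s) :=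
    fun y => (hf.continuous_fderiv one_ne_zero).comp (hγcont y)
  have hFpcont : Continuous fun s => Fp n f θ x s := by
    refine continuous_finset_sum _ fun i _ => Continuous.fun_const_smul ?_ _
    exact continuous_const.clm_comp ((hfderivcont x).clm_comp continuous_const)
  -- continuity of the integrand
  have hFcont : ∀ y, Continuous fun s => ∑ i, f (lightRay n y θ s) i * lightDir n θ i := by
    intro y
    refine continuous_finset_sum _ fun i _ => Continuous.mul ?_ continuous_const
    exact (continuous_apply i).comp (hf.continuous.comp (hγcont y))
  have hFbound : ∀ (y : Fin n → ℝ) (s : ℝ),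
      ‖∑ i, f (lightRay n y θ s) i * lightDir n θ i‖ ≤ K * (C * (1 + |s|) ^ (-(1 + ε))) := by
    intro y s
    calc ‖∑ i, f (lightRay n y θ s) i * lightDir n θ i‖
        ≤ ∑ i, ‖f (lightRay n y θ s) i * lightDir n θ i‖ := norm_sum_le _ _
      _ ≤ ∑ i, ‖lightDir n θ i‖ * (C * (1 + |s|) ^ (-(1 + ε))) := by
          refine Finset.sum_le_sum fun i _ => ?_
          rw [norm_mul, mul_comm]
          refine mul_le_mul_of_nonneg_left ?_ (norm_nonneg _)
          exact (norm_le_pi_norm _ i).trans (hfb y s)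
      _ = K * (C * (1 + |s|) ^ (-(1 + ε))) := by rw [← Finset.sum_mul]
  -- differentiation under the integral sign
  have main : HasFDerivAt (fun y : Fin n → ℝ =>
      ∫ s : ℝ, ∑ i, f (lightRay n y θ s) i * lightDir n θ i) (∫ s : ℝ, Fp n f θ x s) x := by
    refine hasFDerivAt_integral_of_dominated_of_fderiv_le (μ := volume)
      (bound := fun s : ℝ => K * (C * (1 + |s|) ^ (-(1 + ε)))) (Metric.ball_mem_nhds x one_pos)
      (Filter.Eventually.of_forall fun y => (hFcont y).aestronglyMeasurable) ?_
      hFpcont.aestronglyMeasurable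
      (Filter.Eventually.of_forall fun s y _ => hFple y s)
      (hbint.const_mul K)
      (Filter.Eventually.of_forall fun s y _ => hFderiv s y)
    exact (hbint.const_mul K).mono' (hFcont x).aestronglyMeasurable
      (Filter.Eventually.of_forall fun s => hFbound x s)
  have hFpint : Integrable (fun s : ℝ => Fp n f θ x s) :=
    (hbint.const_mul K).mono' hFpcont.aestronglyMeasurable
      (Filter.Eventually.of_forall fun s => hFple x s)
  have happly : fderiv ℝ (fun y : Fin n → ℝ =>
      ∫ s : ℝ, ∑ i, f (lightRay n y θ s) i * lightDir n θ i) x v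
      = ∫ s : ℝ, (Fp n f θ x s) v := by
    rw [main.fderiv]
    exact ContinuousLinearMap.integral_apply hFpint v
  -- second half: the curl identity and the vanishing total derivative
  set K2 : ℝ := ∑ j, |w j| with hK2
  have hK20 : 0 ≤ K2 := Finset.sum_nonneg fun j _ => abs_nonneg _
  have hφderiv : ∀ z, HasFDerivAt (fun z => ∑ j, f z j * ((w j : ℝ) : ℂ)) (Dphi n f w z) z := by
    intro z
    refine HasFDerivAt.fun_sum fun j _ => ?_
    exact (((ContinuousLinearMap.proj (R := ℝ) (φ := fun _ : Fin (n + 1) => ℂ)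
      j).hasFDerivAt).comp z (hfd z).hasFDerivAt).mul_const _
  have hcurve : ∀ s : ℝ, HasDerivAt (fun s => lightRay n x θ s) u s := by
    intro s
    have heq : (fun s : ℝ => lightRay n x θ s)
        = fun s => (Fin.cons 0 x : Fin (n + 1) → ℝ) + s • u := by
      funext s
      funext j
      refine Fin.cases ?_ (fun k => ?_) j
      · simp [lightRay, hu]
      · simp [lightRay, hu]
    rw [heq]
    simpa using ((hasDerivAt_id s).smul_const u).const_add (Fin.cons 0 x : Fin (n + 1) → ℝ)
  have hh : ∀ s : ℝ, HasDerivAt (fun s => ∑ j, f (lightRay n x θ s) j * ((w j : ℝ) : ℂ))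
      ((Dphi n f w (lightRay n x θ s)) u) s := by
    intro s
    exact (hφderiv _).comp_hasDerivAt s (hcurve s)
  have hφb : ∀ s : ℝ, ‖∑ j, f (lightRay n x θ s) j * ((w j : ℝ) : ℂ)‖
      ≤ K2 * (C * (1 + |s|) ^ (-(1 + ε))) := by
    intro s
    calc ‖∑ j, f (lightRay n x θ s) j * ((w j : ℝ) : ℂ)‖
        ≤ ∑ j, ‖f (lightRay n x θ s) j * ((w j : ℝ) : ℂ)‖ := norm_sum_le _ _
      _ ≤ ∑ j, |w j| * (C * (1 + |s|) ^ (-(1 + ε))) := by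
          refine Finset.sum_le_sum fun j _ => ?_
          rw [norm_mul, mul_comm]
          have hwj : ‖((w j : ℝ) : ℂ)‖ = |w j| := by
            rw [Complex.norm_real, Real.norm_eq_abs]
          rw [hwj]
          refine mul_le_mul_of_nonneg_left ?_ (abs_nonneg _)
          exact (norm_le_pi_norm _ j).trans (hfb x s)
      _ = K2 * (C * (1 + |s|) ^ (-(1 + ε))) := by rw [← Finset.sum_mul]
  have hφcont : Continuous fun s : ℝ => ∑ j, f (lightRay n x θ s) j * ((w j : ℝ) : ℂ) := by
    refine continuous_finset_sum _ fun j _ => Continuous.mul ?_ continuous_const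
    exact (continuous_apply j).comp (hf.continuous.comp (hγcont x))
  have hDφu_le : ∀ s : ℝ, ‖(Dphi n f w (lightRay n x θ s)) u‖
      ≤ K2 * ‖u‖ * (C * (1 + |s|) ^ (-(1 + ε))) := by
    intro s
    have hev : (Dphi n f w (lightRay n x θ s)) u
        = ∑ j, ((w j : ℝ) : ℂ) • ((fderiv ℝ f (lightRay n x θ s)) u) j := by
      simp [Dphi, ContinuousLinearMap.sum_apply]
    rw [hev]
    calc ‖∑ j, ((w j : ℝ) : ℂ) • ((fderiv ℝ f (lightRay n x θ s)) u) j‖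
        ≤ ∑ j, ‖((w j : ℝ) : ℂ) • ((fderiv ℝ f (lightRay n x θ s)) u) j‖ := norm_sum_le _ _
      _ ≤ ∑ j, |w j| * (C * (1 + |s|) ^ (-(1 + ε)) * ‖u‖) := by
          refine Finset.sum_le_sum fun j _ => ?_
          rw [norm_smul]
          have hwj : ‖((w j : ℝ) : ℂ)‖ = |w j| := by
            rw [Complex.norm_real, Real.norm_eq_abs]
          rw [hwj]
          refine mul_le_mul_of_nonneg_left ?_ (abs_nonneg _)
          calc ‖((fderiv ℝ f (lightRay n x θ s)) u) j‖
              ≤ ‖(fderiv ℝ f (lightRay n x θ s)) u‖ := norm_le_pi_norm _ j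
            _ ≤ ‖fderiv ℝ f (lightRay n x θ s)‖ * ‖u‖ := ContinuousLinearMap.le_opNorm _ _
            _ ≤ C * (1 + |s|) ^ (-(1 + ε)) * ‖u‖ :=
                mul_le_mul_of_nonneg_right (hfb' x s) (norm_nonneg _)
      _ = K2 * ‖u‖ * (C * (1 + |s|) ^ (-(1 + ε))) := by
          rw [← Finset.sum_mul]; ring
  have hDφucont : Continuous fun s : ℝ => (Dphi n f w (lightRay n x θ s)) u := by
    have hc : Continuous fun s : ℝ => Dphi n f w (lightRay n x θ s) := by
      refine continuous_finset_sum _ fun j _ => Continuous.fun_const_smul ?_ _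
      exact continuous_const.clm_comp (hfderivcont x)
    exact hc.clm_apply continuous_const
  have hDφuint : Integrable (fun s : ℝ => (Dphi n f w (lightRay n x θ s)) u) := by
    refine (hbint.const_mul (K2 * ‖u‖)).mono' hDφucont.aestronglyMeasurable
      (Filter.Eventually.of_forall fun s => ?_)
    simpa [mul_assoc] using hDφu_le s
  have hg0 : ∀ l : Filter ℝ, Filter.Tendsto (fun s : ℝ => |s|) l Filter.atTop →
      Filter.Tendsto (fun s : ℝ => K2 * (C * (1 + |s|) ^ (-(1 + ε)))) l (nhds 0) := by
    intro l hl
    have h1 : Filter.Tendsto (fun s : ℝ => (1 + |s|) ^ (-(1 + ε))) l (nhds 0) :=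
      (tendsto_rpow_neg_atTop (by linarith)).comp (Filter.tendsto_atTop_add_const_left _ 1 hl)
    have h2 := (h1.const_mul C).const_mul K2
    simpa using h2
  have hφtop : Filter.Tendsto (fun s : ℝ => ∑ j, f (lightRay n x θ s) j * ((w j : ℝ) : ℂ))
      Filter.atTop (nhds 0) :=
    squeeze_zero_norm hφb (hg0 _ Filter.tendsto_abs_atTop_atTop)
  have hφbot : Filter.Tendsto (fun s : ℝ => ∑ j, f (lightRay n x θ s) j * ((w j : ℝ) : ℂ))
      Filter.atBot (nhds 0) :=
    squeeze_zero_norm hφb (hg0 _ Filter.tendsto_abs_atBot_atTop)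
  have hzero : ∫ s : ℝ, (Dphi n f w (lightRay n x θ s)) u = 0 := by
    have h := integral_of_hasDerivAt_of_tendsto hh hDφuint hφbot hφtop
    simpa using h
  -- direction coordinates
  have hdiru : ∀ i, lightDir n θ i = ((u i : ℝ) : ℂ) := by
    intro i
    refine Fin.cases ?_ (fun k => ?_) i <;> simp [lightDir, hu]
  -- the pointwise identity
  have hpoint : ∀ s : ℝ, (Fp n f θ x s) v
      = (∑ i, (∑ j ∈ Finset.univ \ {i},
            (pd n (fun z => f z i) j (lightRay n x θ s)
              - pd n (fun z => f z j) i (lightRay n x θ s)) * ((w j : ℝ) : ℂ))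
          * lightDir n θ i)
        + (Dphi n f w (lightRay n x θ s)) u := by
    intro s
    set M : Fin (n + 1) → Fin (n + 1) → ℂ :=
      fun i j => (fderiv ℝ f (lightRay n x θ s)) (Pi.single j 1) i with hM
    have hpd : ∀ i j, pd n (fun z' => f z' i) j (lightRay n x θ s) = M i j := by
      intro i j
      have hcomp : HasFDerivAt (fun z' => f z' i)
          ((ContinuousLinearMap.proj (R := ℝ) (φ := fun _ : Fin (n + 1) => ℂ) i).comp
            (fderiv ℝ f (lightRay n x θ s))) (lightRay n x θ s) :=
        (ContinuousLinearMap.proj (R := ℝ) (φ := fun _ : Fin (n + 1) => ℂ)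
          i).hasFDerivAt.comp _ (hfd _).hasFDerivAt
      show fderiv ℝ (fun z' => f z' i) (lightRay n x θ s) (Pi.single j 1) = M i j
      rw [hcomp.fderiv]
      simp [hM]
    have hexp : ∀ (y : Fin (n + 1) → ℝ) (i : Fin (n + 1)),
        ((fderiv ℝ f (lightRay n x θ s)) y) i = ∑ j, ((y j : ℝ) : ℂ) * M i j := by
      intro y i
      conv_lhs => rw [single_expand y]
      rw [map_sum, Finset.sum_apply]
      refine Finset.sum_congr rfl fun j _ => ?_
      rw [ContinuousLinearMap.map_smul]
      simp [hM, Complex.real_smul]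
    have hWv : Wmap n v = w := by rw [Wmap_apply, hw]
    have hFv : (Fp n f θ x s) v = ∑ i, ((u i : ℝ) : ℂ) * ∑ j, ((w j : ℝ) : ℂ) * M i j := by
      have hev : (Fp n f θ x s) v
          = ∑ i, lightDir n θ i • ((fderiv ℝ f (lightRay n x θ s)) w) i := by
        simp [Fp, ContinuousLinearMap.sum_apply, hWv]
      rw [hev]
      refine Finset.sum_congr rfl fun i _ => ?_
      rw [hexp w i, hdiru i, smul_eq_mul]
    have hDu : (Dphi n f w (lightRay n x θ s)) u
        = ∑ j, ((w j : ℝ) : ℂ) * ∑ i, ((u i : ℝ) : ℂ) * M j i := by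
      have hev : (Dphi n f w (lightRay n x θ s)) u
          = ∑ j, ((w j : ℝ) : ℂ) • ((fderiv ℝ f (lightRay n x θ s)) u) j := by
        simp [Dphi, ContinuousLinearMap.sum_apply]
      rw [hev]
      refine Finset.sum_congr rfl fun j _ => ?_
      rw [hexp u j, smul_eq_mul]
    rw [hFv, hDu]
    have hswap : ∑ j, ((w j : ℝ) : ℂ) * ∑ i, ((u i : ℝ) : ℂ) * M j i
        = ∑ i, ((u i : ℝ) : ℂ) * ∑ j, ((w j : ℝ) : ℂ) * M j i := by
      simp_rw [Finset.mul_sum]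
      rw [Finset.sum_comm]
      exact Finset.sum_congr rfl fun i _ => Finset.sum_congr rfl fun j _ => by ring
    rw [hswap, ← Finset.sum_add_distrib]
    refine Finset.sum_congr rfl fun i _ => ?_
    have hrepd : (∑ j ∈ Finset.univ \ {i},
        (pd n (fun z => f z i) j (lightRay n x θ s)
          - pd n (fun z => f z j) i (lightRay n x θ s)) * ((w j : ℝ) : ℂ))
        = ∑ j ∈ Finset.univ \ {i}, (M i j - M j i) * ((w j : ℝ) : ℂ) :=
      Finset.sum_congr rfl fun j _ => by rw [hpd i j, hpd j i]
    rw [hrepd, hdiru i]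
    have h1 := Finset.sum_eq_sum_sdiff_singleton_add (Finset.mem_univ i)
      (fun j => ((w j : ℝ) : ℂ) * M i j)
    have h2 := Finset.sum_eq_sum_sdiff_singleton_add (Finset.mem_univ i)
      (fun j => ((w j : ℝ) : ℂ) * M j i)
    have h3 : ∑ j ∈ Finset.univ \ {i}, (M i j - M j i) * ((w j : ℝ) : ℂ)
        = (∑ j ∈ Finset.univ \ {i}, ((w j : ℝ) : ℂ) * M i j)
          - ∑ j ∈ Finset.univ \ {i}, ((w j : ℝ) : ℂ) * M j i := by
      rw [← Finset.sum_sub_distrib]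
      exact Finset.sum_congr rfl fun j _ => by ring
    rw [h1, h2, h3]
    ring
  -- assembly
  have hFvint : Integrable (fun s : ℝ => (Fp n f θ x s) v) := by
    refine (hbint.const_mul (K * ‖v‖)).mono'
      (hFpcont.clm_apply continuous_const).aestronglyMeasurable
      (Filter.Eventually.of_forall fun s => ?_)
    calc ‖(Fp n f θ x s) v‖ ≤ ‖Fp n f θ x s‖ * ‖v‖ := ContinuousLinearMap.le_opNorm _ _
      _ ≤ K * (C * (1 + |s|) ^ (-(1 + ε))) * ‖v‖ :=
          mul_le_mul_of_nonneg_right (hFple x s) (norm_nonneg v)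
      _ = K * ‖v‖ * (C * (1 + |s|) ^ (-(1 + ε))) := by ring
  have hTint : Integrable (fun s : ℝ => ∑ i, (∑ j ∈ Finset.univ \ {i},
      (pd n (fun z => f z i) j (lightRay n x θ s)
        - pd n (fun z => f z j) i (lightRay n x θ s)) * ((w j : ℝ) : ℂ))
      * lightDir n θ i) := by
    refine (hFvint.sub hDφuint).congr (Filter.Eventually.of_forall fun s => ?_)
    show (Fp n f θ x s) v - (Dphi n f w (lightRay n x θ s)) u = _
    rw [hpoint s]
    ring
  rw [happly]
  calc ∫ s : ℝ, (Fp n f θ x s) v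
      = ∫ s : ℝ, ((∑ i, (∑ j ∈ Finset.univ \ {i},
          (pd n (fun z => f z i) j (lightRay n x θ s)
            - pd n (fun z => f z j) i (lightRay n x θ s)) * ((w j : ℝ) : ℂ))
          * lightDir n θ i)
        + (Dphi n f w (lightRay n x θ s)) u) :=
        integral_congr_ae (Filter.Eventually.of_forall hpoint)
    _ = (∫ s : ℝ, ∑ i, (∑ j ∈ Finset.univ \ {i},
          (pd n (fun z => f z i) j (lightRay n x θ s)
            - pd n (fun z => f z j) i (lightRay n x θ s)) * ((w j : ℝ) : ℂ))
          * lightDir n θ i)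
        + ∫ s : ℝ, (Dphi n f w (lightRay n x θ s)) u := integral_add hTint hDφuint
    _ = _ := by rw [hzero, add_zero]
end

section
/- Solenoidal obstruction example (n = 2): Let ζ = (τ, ξ) ∈ R^{1+2} be space-like (τ² < |ξ|²) and set η(ζ) = (1, ξ²/√(|ξ|²−τ²), −ξ¹/√(|ξ|²−τ²)). Then η(ζ) is a nonzero vector in C^{1+2} satisfying (1, θ_+(ζ))·η(ζ) = 0 while (1, θ_−(ζ))·η(ζ) ≠ 0, where θ_±(ζ) = (1/|ξ|²)(−τξ¹ ∓ √(|ξ|²−τ²) ξ², −τξ² ± √(|ξ|²−τ²) ξ¹). -/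
/-- Solenoidal obstruction example for `n = 2`: for a space-like `ζ = (τ,ξ)`, the vector
`η(ζ) = (1, ξ²/√(|ξ|²−τ²), −ξ¹/√(|ξ|²−τ²)) ∈ ℂ^{1+2}` is nonzero, satisfies
`(1,θ₊(ζ))·η(ζ) = 0`, but `(1,θ₋(ζ))·η(ζ) ≠ 0`. -/
theorem stmt_12 (τ ξ1 ξ2 : ℝ) (hs : τ ^ 2 < ξ1 ^ 2 + ξ2 ^ 2) :
    let q : ℝ := ξ1 ^ 2 + ξ2 ^ 2
    let r : ℝ := Real.sqrt (q - τ ^ 2)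
    let θp : ℝ × ℝ := ((-τ * ξ1 - r * ξ2) / q, (-τ * ξ2 + r * ξ1) / q)
    let θm : ℝ × ℝ := ((-τ * ξ1 + r * ξ2) / q, (-τ * ξ2 - r * ξ1) / q)
    let η : ℂ × ℂ × ℂ := (1, ((ξ2 / r : ℝ) : ℂ), ((-ξ1 / r : ℝ) : ℂ))
    η ≠ 0 ∧
    (1 : ℂ) * η.1 + (θp.1 : ℂ) * η.2.1 + (θp.2 : ℂ) * η.2.2 = 0 ∧
    (1 : ℂ) * η.1 + (θm.1 : ℂ) * η.2.1 + (θm.2 : ℂ) * η.2.2 ≠ 0 := by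
  intro q r θp θm η
  have hq : 0 < q := lt_of_le_of_lt (sq_nonneg τ) hs
  have hr : 0 < r := Real.sqrt_pos.mpr (by simp only [q] at hs ⊢; linarith)
  have hr2 : r ^ 2 = q - τ ^ 2 := Real.sq_sqrt (by simp only [q] at hs ⊢; linarith)
  have hqd : q = ξ1 ^ 2 + ξ2 ^ 2 := rfl
  refine ⟨?_, ?_, ?_⟩
  · intro h
    have : (η.1 : ℂ) = 0 := by rw [h]; rfl
    simp [η] at this
  · show (1 : ℂ) * 1 + (((-τ * ξ1 - r * ξ2) / q : ℝ) : ℂ) * ((ξ2 / r : ℝ) : ℂ)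
      + (((-τ * ξ2 + r * ξ1) / q : ℝ) : ℂ) * ((-ξ1 / r : ℝ) : ℂ) = 0
    have : (1 : ℝ) * 1 + ((-τ * ξ1 - r * ξ2) / q) * (ξ2 / r)
        + ((-τ * ξ2 + r * ξ1) / q) * (-ξ1 / r) = 0 := by
      field_simp
      nlinarith [hqd]
    exact_mod_cast this
  · show (1 : ℂ) * 1 + (((-τ * ξ1 + r * ξ2) / q : ℝ) : ℂ) * ((ξ2 / r : ℝ) : ℂ)
      + (((-τ * ξ2 - r * ξ1) / q : ℝ) : ℂ) * ((-ξ1 / r : ℝ) : ℂ) ≠ 0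
    have : (1 : ℝ) * 1 + ((-τ * ξ1 + r * ξ2) / q) * (ξ2 / r)
        + ((-τ * ξ2 - r * ξ1) / q) * (-ξ1 / r) = 2 := by
      field_simp
      nlinarith [hqd]
    intro h
    have h' : (1 : ℝ) * 1 + ((-τ * ξ1 + r * ξ2) / q) * (ξ2 / r)
        + ((-τ * ξ2 - r * ξ1) / q) * (-ξ1 / r) = 0 := by exact_mod_cast h
    rw [this] at h'
    norm_num at h'
end
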